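/- Let g be a Kähler metric on a compact Kähler manifold X with semi-positive holomorphic sectional curvature H_g, and suppose e ∈ T_{X,p} is a unit vector with H_g([e]) = 0 (i.e. e is a minimizer of H_g). Then for every tangent vector v ∈ T_{X,p}, the curvature term R_g(v, v̄, e, ē) is non-negative. -/

import Mathlib

/-!
STATEMENT 11.  The minimizer lemma (Yang; cf. Brendle, Bando–Kalka–Tsai),
stated pointwise on a tangent space: if the (Kähler) curvature tensor `R` of
`(X, g)` has semi-positive holomorphic sectional curvature, i.e.
`R(v, v̄, v, v̄) ≥ 0` for all `v`, and `e` is a unit vector with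
`H_g([e]) = R(e, ē, e, ē) = 0` (a minimizer of `H_g`), then
`R(v, v̄, e, ē) ≥ 0` for every tangent vector `v`.

The tangent space at the given point is modeled by a finite-dimensional
complex inner product space `V`, with `R x y z u` standing for `R(x, ȳ, z, ū)`
and satisfying the symmetries of a Kähler curvature tensor.
-/

open scoped ComplexConjugate

theorem curvature_nonneg_of_hsc_minimizer
    {V : Type*} [NormedAddCommGroup V] [InnerProductSpace ℂ V]
    [FiniteDimensional ℂ V]
    (R : V → V → V → V → ℂ)
    (hlin1 : ∀ y z u, IsLinearMap ℂ fun x => R x y z u)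
    (hlin3 : ∀ x y u, IsLinearMap ℂ fun z => R x y z u)
    (hadd2 : ∀ x y y' z u, R x (y + y') z u = R x y z u + R x y' z u)
    (hsmul2 : ∀ x y z u (c : ℂ), R x (c • y) z u = conj c * R x y z u)
    (hadd4 : ∀ x y z u u', R x y z (u + u') = R x y z u + R x y z u')
    (hsmul4 : ∀ x y z u (c : ℂ), R x y z (c • u) = conj c * R x y z u)
    (hsym13 : ∀ x y z u, R x y z u = R z y x u)
    (hsym24 : ∀ x y z u, R x y z u = R x u z y)
    (hherm : ∀ x y z u, R x y z u = conj (R y x u z))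
    -- semi-positivity of the holomorphic sectional curvature
    (hsemi : ∀ v : V, 0 ≤ (R v v v v).re)
    -- `e` is a unit vector minimizing the holomorphic sectional curvature
    (e : V) (he : ‖e‖ = 1) (hmin : R e e e e = 0) :
    ∀ v : V, 0 ≤ (R v v e e).re := by
  intro v
  have add1 : ∀ x x' y z u, R (x + x') y z u = R x y z u + R x' y z u :=
    fun x x' y z u => (hlin1 y z u).map_add x x'
  have smul1 : ∀ (c : ℂ) x y z u, R (c • x) y z u = c * R x y z u :=
    fun c x y z u => (hlin1 y z u).map_smul c x
  have add3 : ∀ x y z z' u, R x y (z + z') u = R x y z u + R x y z' u :=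
    fun x y z z' u => (hlin3 x y u).map_add z z'
  have smul3 : ∀ (c : ℂ) x y z u, R x y (c • z) u = c * R x y z u :=
    fun c x y z u => (hlin3 x y u).map_smul c z
  have key : ∀ w : V, 0 ≤ 4 * (R w w e e).re + 2 * (R w e w e).re := by
    intro w
    set S : ℂ := R w w e e + R w e w e + R w e e w + R e w w e + R e w e w + R e e w w with hS
    set A : ℝ := (R w w w w).re with hA
    have expand : ∀ t : ℝ,
        R (e + (t:ℂ) • w) (e + (t:ℂ) • w) (e + (t:ℂ) • w) (e + (t:ℂ) • w)
          = R e e e e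
            + (t:ℂ) * (R w e e e + R e w e e + R e e w e + R e e e w)
            + (t:ℂ)^2 * S
            + (t:ℂ)^3 * (R w w w e + R w w e w + R w e w w + R e w w w)
            + (t:ℂ)^4 * R w w w w := by
      intro t
      simp only [add1, hadd2, add3, hadd4, smul1, hsmul2, smul3, hsmul4,
        Complex.conj_ofReal, hS]
      ring
    have h2 : ∀ t : ℝ, t ≠ 0 → 0 ≤ S.re + t^2 * A := by
      intro t ht
      have h := add_nonneg (hsemi (e + (t:ℂ) • w)) (hsemi (e + ((-t : ℝ):ℂ) • w))
      rw [expand t, expand (-t)] at h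
      simp only [hmin, zero_add, Complex.add_re, Complex.mul_re,
        ← Complex.ofReal_pow, Complex.ofReal_re, Complex.ofReal_im,
        zero_mul, mul_zero, sub_zero] at h
      ring_nf at h
      have ht2 : 0 < t^2 := by positivity
      nlinarith [h, ht2, sq_nonneg t]
    have hSre : 0 ≤ S.re := by
      by_contra hneg
      push_neg at hneg
      have hA0 : 0 ≤ A := hsemi w
      rcases eq_or_lt_of_le hA0 with hA0' | hApos
      · have := h2 1 one_ne_zero
        rw [← hA0'] at this
        simp at this
        linarith
      · set t := Real.sqrt (-S.re / (2 * A)) with htdef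
        have harg : 0 < -S.re / (2 * A) := div_pos (by linarith) (by linarith)
        have ht0 : t ≠ 0 := by
          have := Real.sqrt_pos.mpr harg
          linarith
        have ht2 : t^2 = -S.re / (2 * A) := Real.sq_sqrt harg.le
        have h3 := h2 t ht0
        rw [ht2] at h3
        have hAne : A ≠ 0 := ne_of_gt hApos
        have hval : (-S.re/(2*A))*A = -(S.re/2) := by field_simp
        rw [hval] at h3
        linarith
    -- identify S.re with 4*(R w w e e).re + 2*(R w e w e).re
    have e1 : R e e w w = R w w e e := by rw [hsym13, hsym24]
    have e2 : R w e e w = R w w e e := by rw [hsym24]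
    have e3 : R e w w e = R w w e e := by rw [hsym13]
    have e4 : (R e w e w).re = (R w e w e).re := by
      rw [hherm e w e w]; exact Complex.conj_re _
    have : S.re = 4 * (R w w e e).re + 2 * (R w e w e).re := by
      rw [hS]
      simp only [Complex.add_re, e1, e2, e3, e4]
      ring
    linarith [hSre, this.symm.le, this.le]
  have k1 := key v
  have k2 := key (Complex.I • v)
  simp only [smul1, hsmul2, smul3, Complex.conj_I] at k2
  have hq : Complex.I * (-Complex.I * R v v e e) = R v v e e := by
    rw [← mul_assoc, mul_neg, Complex.I_mul_I]; ring
  have hb : Complex.I * (Complex.I * R v e v e) = -(R v e v e) := by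
    rw [← mul_assoc, Complex.I_mul_I]; ring
  rw [hq, hb, Complex.neg_re] at k2
  linarith
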